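/- Let K be a compact metrizable space. Then K is strongly countable-dimensional if and only if its fd-height is countable, i.e., there exists an ordinal α < ω₁ with K^{[α]} = ∅. -/

import Mathlib

open Set

/-- Covering dimension at most `n`: every finite open cover admits an open
shrinking (refinement indexed by the same set) of order at most `n + 1`. -/
def CovDimLE (X : Type*) [TopologicalSpace X] (n : ℕ) : Prop :=
  ∀ (ι : Type) (U : ι → Set X), Finite ι → (∀ i, IsOpen (U i)) →
    (⋃ i, U i) = univ →
    ∃ V : ι → Set X, (∀ i, IsOpen (V i) ∧ V i ⊆ U i) ∧ (⋃ i, V i) = univ ∧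
      ∀ x : X, {i | x ∈ V i}.Finite ∧ {i | x ∈ V i}.ncard ≤ n + 1

/-- A space is finite-dimensional if its covering dimension is at most `n`
for some `n`. -/
def TopFiniteDim (X : Type*) [TopologicalSpace X] : Prop :=
  ∃ n : ℕ, CovDimLE X n

/-- `I(Y)`: the union of all subsets of `Y` which are open in `Y` and
finite-dimensional (in the subspace topology). -/
def fdKernel {X : Type*} [TopologicalSpace X] (Y : Set X) : Set X :=
  ⋃₀ {U : Set X | U ⊆ Y ∧ (∃ V : Set X, IsOpen V ∧ U = V ∩ Y) ∧ TopFiniteDim ↥U}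

/-- The `α`-th fd-derivative `X^{[α]}`. -/
noncomputable def fdDeriv (X : Type*) [TopologicalSpace X] (α : Ordinal) : Set X :=
  Ordinal.limitRecOn α univ (fun _ S => S \ fdKernel S)
    (fun o _ ih => ⋂ β, ⋂ h : β < o, ih β h)


lemma covDimLE_of_isEmpty (X : Type*) [TopologicalSpace X] [IsEmpty X] (n : ℕ) :
    CovDimLE X n := by
  intro ι U _ hUo hUc
  exact ⟨U, fun i => ⟨hUo i, subset_rfl⟩, hUc, fun x => isEmptyElim x⟩

lemma covDimLE_homeomorph {X Y : Type*} [TopologicalSpace X] [TopologicalSpace Y]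
    (e : X ≃ₜ Y) {n : ℕ} (h : CovDimLE X n) : CovDimLE Y n := by
  intro ι U hι hUo hUc
  obtain ⟨V, hV1, hV2, hV3⟩ := h ι (fun i => e ⁻¹' U i) hι
    (fun i => (hUo i).preimage e.continuous)
    (by rw [← preimage_iUnion, hUc, preimage_univ])
  refine ⟨fun i => e.symm ⁻¹' V i, fun i => ⟨((hV1 i).1).preimage e.symm.continuous, ?_⟩, ?_, ?_⟩
  · intro y hy
    have := (hV1 i).2 hy
    simpa using this
  · rw [← preimage_iUnion, hV2, preimage_univ]
  · intro y
    have : {i | y ∈ e.symm ⁻¹' V i} = {i | e.symm y ∈ V i} := rfl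
    rw [this]; exact hV3 (e.symm y)

/-- homeomorphism between a nested subtype and the plain subtype -/
noncomputable def subsetHomeo {X : Type*} [TopologicalSpace X] {A B : Set X} (hAB : A ⊆ B) :
    ↥(Subtype.val ⁻¹' A : Set ↥B) ≃ₜ ↥A where
  toFun x := ⟨x.1.1, x.2⟩
  invFun a := ⟨⟨a.1, hAB a.2⟩, a.2⟩
  left_inv x := rfl
  right_inv a := rfl
  continuous_toFun := Continuous.subtype_mk (continuous_subtype_val.comp continuous_subtype_val) _
  continuous_invFun := Continuous.subtype_mk (Continuous.subtype_mk continuous_subtype_val _) _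

/-- L1: a relatively closed subset of a subspace of covering dimension ≤ n has
covering dimension ≤ n. -/
lemma covDimLE_subset_closed {X : Type*} [TopologicalSpace X] {A B C : Set X} {n : ℕ}
    (hAB : A ⊆ B) (hC : IsClosed C) (hAC : A = C ∩ B) (h : CovDimLE ↥B n) :
    CovDimLE ↥A n := by
  intro ι U hι hUo hUc
  -- realize each U i as preimage of an open set in X
  choose O hOo hOU using fun i => isOpen_induced_iff.mp (hUo i)
  -- a cover of ↥B indexed by Option ι
  classical
  haveI := hι
  set U' : Option ι → Set ↥B := fun j =>
    Option.rec (Subtype.val ⁻¹' Cᶜ) (fun i => Subtype.val ⁻¹' O i) j with hU'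
  have hU'o : ∀ j, IsOpen (U' j) := by
    rintro (_|i)
    · exact hC.isOpen_compl.preimage continuous_subtype_val
    · exact (hOo i).preimage continuous_subtype_val
  have hU'c : (⋃ j, U' j) = univ := by
    apply eq_univ_of_forall
    intro b
    by_cases hb : (b : X) ∈ A
    · have : (⟨b, hb⟩ : ↥A) ∈ ⋃ i, U i := hUc ▸ mem_univ _
      obtain ⟨i, hi⟩ := mem_iUnion.mp this
      have : (⟨b, hb⟩ : ↥A) ∈ U i := hi
      rw [← hOU i] at this
      exact mem_iUnion.mpr ⟨some i, this⟩
    · refine mem_iUnion.mpr ⟨none, ?_⟩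
      simp only [U', mem_preimage, mem_compl_iff]
      intro hbC
      exact hb (hAC ▸ ⟨hbC, b.2⟩)
  obtain ⟨V', hV'1, hV'2, hV'3⟩ := h (Option ι) U' (haveI := Fintype.ofFinite ι; Finite.of_fintype _) hU'o hU'c
  -- pull back along the inclusion ↥A → ↥B
  choose P hPo hPV using fun j => isOpen_induced_iff.mp (hV'1 j).1
  refine ⟨fun i => Subtype.val ⁻¹' P (some i), fun i => ?_, ?_, ?_⟩
  · constructor
    · exact (hPo _).preimage continuous_subtype_val
    · intro a ha
      have hb : (⟨a.1, hAB a.2⟩ : ↥B) ∈ V' (some i) := by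
        rw [← hPV]; exact ha
      have := (hV'1 (some i)).2 hb
      rw [← hOU i]; exact this
  · apply eq_univ_of_forall
    intro a
    have hb : (⟨a.1, hAB a.2⟩ : ↥B) ∈ ⋃ j, V' j := hV'2 ▸ mem_univ _
    obtain ⟨j, hj⟩ := mem_iUnion.mp hb
    cases j with
    | none =>
      exfalso
      have := (hV'1 none).2 hj
      have haC : (a : X) ∈ C := (hAC ▸ a.2 : (a:X) ∈ C ∩ B).1
      exact this haC
    | some i =>
      rw [← hPV (some i)] at hj
      exact mem_iUnion.mpr ⟨i, hj⟩
  · intro a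
    refine ⟨toFinite _, ?_⟩
    have hsub : (fun i => some i) '' {i | a ∈ Subtype.val ⁻¹' P (some i)}
        ⊆ {j | (⟨a.1, hAB a.2⟩ : ↥B) ∈ V' j} := by
      rintro j ⟨i, hi, rfl⟩
      show (⟨a.1, hAB a.2⟩ : ↥B) ∈ V' (some i)
      rw [← hPV (some i)]; exact hi
    calc {i | a ∈ Subtype.val ⁻¹' P (some i)}.ncard
        = ((fun i => some i) '' {i | a ∈ Subtype.val ⁻¹' P (some i)}).ncard :=
          (Set.ncard_image_of_injective _ (Option.some_injective ι)).symm
      _ ≤ {j | (⟨a.1, hAB a.2⟩ : ↥B) ∈ V' j}.ncard :=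
          Set.ncard_le_ncard hsub (hV'3 _).1
      _ ≤ n + 1 := (hV'3 _).2

/-- L3: shrink a finite open cover so that its order at points of a closed set
`F` of dimension ≤ n is at most n+1. -/
lemma shrink_order_on_closed {X : Type*} [TopologicalSpace X] {F : Set X}
    (hF : IsClosed F) {n : ℕ} (hdim : CovDimLE ↥F n)
    (ι : Type) [hι : Finite ι] (U : ι → Set X) (hUo : ∀ i, IsOpen (U i))
    (hUc : (⋃ i, U i) = univ) :
    ∃ V : ι → Set X, (∀ i, IsOpen (V i) ∧ V i ⊆ U i) ∧ (⋃ i, V i) = univ ∧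
      ∀ x ∈ F, {i | x ∈ V i}.ncard ≤ n + 1 := by
  obtain ⟨W, hW1, hW2, hW3⟩ := hdim ι (fun i => Subtype.val ⁻¹' U i) hι
    (fun i => (hUo i).preimage continuous_subtype_val)
    (by rw [← preimage_iUnion, hUc, preimage_univ])
  choose O hOo hOW using fun i => isOpen_induced_iff.mp (hW1 i).1
  refine ⟨fun i => (O i ∩ U i) ∪ (U i \ F), fun i => ?_, ?_, ?_⟩
  · refine ⟨(((hOo i).inter (hUo i)).union ((hUo i).sdiff hF)), ?_⟩
    rintro x (⟨-, hx⟩|⟨hx, -⟩) <;> exact hx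
  · apply eq_univ_of_forall
    intro x
    by_cases hx : x ∈ F
    · have : (⟨x, hx⟩ : ↥F) ∈ ⋃ i, W i := hW2 ▸ mem_univ _
      obtain ⟨i, hi⟩ := mem_iUnion.mp this
      have hxO : x ∈ O i := by rw [← hOW i] at hi; exact hi
      have hxU : x ∈ U i := (hW1 i).2 hi
      exact mem_iUnion.mpr ⟨i, Or.inl ⟨hxO, hxU⟩⟩
    · have : x ∈ ⋃ i, U i := hUc ▸ mem_univ _
      obtain ⟨i, hi⟩ := mem_iUnion.mp this
      exact mem_iUnion.mpr ⟨i, Or.inr ⟨hi, hx⟩⟩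
  · intro x hx
    have hsub : {i | x ∈ (O i ∩ U i) ∪ (U i \ F)} ⊆ {i | (⟨x, hx⟩ : ↥F) ∈ W i} := by
      rintro i (⟨hO, -⟩|⟨-, hF'⟩)
      · show (⟨x, hx⟩ : ↥F) ∈ W i
        rw [← hOW i]; exact hO
      · exact absurd hx hF'
    exact le_trans (Set.ncard_le_ncard hsub (hW3 _).1) (hW3 _).2

/-- Swelling lemma: in a normal space a finite family of closed sets can be
swelled to open sets preserving the "empty intersection" pattern. -/
lemma swelling {X : Type*} [TopologicalSpace X] [NormalSpace X]
    {ι : Type} [Finite ι] (A : ι → Set X) (U : ι → Set X)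
    (hA : ∀ i, IsClosed (A i)) (hU : ∀ i, IsOpen (U i)) (hAU : ∀ i, A i ⊆ U i) :
    ∃ V : ι → Set X, (∀ i, IsOpen (V i) ∧ A i ⊆ V i ∧ V i ⊆ U i) ∧
      ∀ s : Finset ι, (⋂ i ∈ s, V i).Nonempty → (⋂ i ∈ s, A i).Nonempty := by
  classical
  haveI : Fintype ι := Fintype.ofFinite ι
  -- hybrid family indexed by a finset t
  suffices H : ∀ t : Finset ι, ∃ V : ι → Set X,
      (∀ i ∈ t, IsOpen (V i) ∧ A i ⊆ V i ∧ closure (V i) ⊆ U i) ∧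
      (∀ i ∉ t, V i = A i) ∧
      ∀ s : Finset ι,
        (⋂ i ∈ s, (if i ∈ t then closure (V i) else A i)).Nonempty →
        (⋂ i ∈ s, A i).Nonempty by
    obtain ⟨V, h1, h2, h3⟩ := H Finset.univ
    refine ⟨V, fun i => ⟨(h1 i (Finset.mem_univ i)).1, (h1 i (Finset.mem_univ i)).2.1,
      subset_trans subset_closure (h1 i (Finset.mem_univ i)).2.2⟩, fun s hs => ?_⟩
    apply h3 s
    obtain ⟨x, hx⟩ := hs
    refine ⟨x, ?_⟩
    simp only [Finset.mem_univ, if_true, mem_iInter] at hx ⊢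
    intro i hi
    exact subset_closure (hx i hi)
  intro t
  induction t using Finset.induction_on with
  | empty =>
    exact ⟨A, fun i hi => absurd hi (Finset.notMem_empty i), fun i _ => rfl,
      fun s hs => by simpa using hs⟩
  | @insert j t hj ih =>
    obtain ⟨V, h1, h2, h3⟩ := ih
    -- hybrid family for t
    set H : ι → Set X := fun i => if i ∈ t then closure (V i) else A i with hH
    have hHc : ∀ i, IsClosed (H i) := by
      intro i; by_cases hi : i ∈ t <;> simp [hH, hi, hA i]
    -- the bad set
    set Z : Set X := ⋃ s ∈ {s : Finset ι | (⋂ i ∈ s, H i) ∩ A j = ∅},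
        ⋂ i ∈ s, H i with hZ
    have hZc : IsClosed Z := by
      apply Set.Finite.isClosed_biUnion (Set.toFinite _)
      intro s _
      exact isClosed_biInter (fun i _ => hHc i)
    have hZA : Disjoint (A j) Z := by
      rw [disjoint_iff_inter_eq_empty]
      ext x
      simp only [mem_inter_iff, mem_empty_iff_false, iff_false, not_and]
      intro hxA hxZ
      obtain ⟨s, hs, hxs⟩ := mem_iUnion₂.mp hxZ
      have : x ∈ (⋂ i ∈ s, H i) ∩ A j := ⟨hxs, hxA⟩
      rw [hs] at this
      exact this
    -- normality: separate A j from Z ∪ (U j)ᶜ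
    have hsep : ∃ G : Set X, IsOpen G ∧ A j ⊆ G ∧ closure G ⊆ (U j) \ Z := by
      have hclosed : IsClosed (Z ∪ (U j)ᶜ) := hZc.union (hU j).isClosed_compl
      have hdisj : Disjoint (A j) (Z ∪ (U j)ᶜ) := by
        refine Disjoint.union_right hZA ?_
        rw [Set.disjoint_compl_right_iff_subset]
        exact hAU j
      obtain ⟨G, G', hGo, hG'o, hAG, hZG', hGG'⟩ :=
        NormalSpace.normal (A j) (Z ∪ (U j)ᶜ) (hA j) hclosed hdisj
      refine ⟨G, hGo, hAG, ?_⟩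
      have h1 : closure G ⊆ G'ᶜ := by
        apply closure_minimal _ hG'o.isClosed_compl
        exact subset_compl_iff_disjoint_right.mpr hGG'
      have h2 : G'ᶜ ⊆ (U j) \ Z := by
        intro x hx
        have : x ∉ Z ∪ (U j)ᶜ := fun hmem => hx (hZG' hmem)
        rw [mem_union, not_or] at this
        exact ⟨not_not.mp (fun h => this.2 h), this.1⟩
      exact h1.trans h2
    obtain ⟨G, hGo, hAG, hGU⟩ := hsep
    refine ⟨Function.update V j G, ?_, ?_, ?_⟩
    · intro i hi
      rcases Finset.mem_insert.mp hi with rfl | hi'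
      · rw [Function.update_self]
        exact ⟨hGo, hAG, hGU.trans (diff_subset)⟩
      · have hne : i ≠ j := fun h => hj (h ▸ hi')
        rw [Function.update_of_ne hne]
        exact h1 i hi'
    · intro i hi
      have hne : i ≠ j := fun h => hi (h ▸ Finset.mem_insert_self j t)
      rw [Function.update_of_ne hne]
      exact h2 i (fun h => hi (Finset.mem_insert_of_mem h))
    · intro s hs
      by_cases hjs : j ∈ s
      · -- split off j
        obtain ⟨x, hx⟩ := hs
        have hxj : x ∈ closure G := by
          have := mem_iInter₂.mp hx j hjs
          rw [if_pos (Finset.mem_insert_self j t), Function.update_self] at this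
          exact this
        have hxs' : x ∈ ⋂ i ∈ s.erase j, H i := by
          apply mem_iInter₂.mpr
          intro i hi
          have hij : i ≠ j := Finset.ne_of_mem_erase hi
          have his : i ∈ s := Finset.mem_of_mem_erase hi
          have := mem_iInter₂.mp hx i his
          by_cases hit : i ∈ t
          · rw [if_pos (Finset.mem_insert_of_mem hit), Function.update_of_ne hij] at this
            simp [hH, hit]
            exact this
          · rw [if_neg (by simp [hij, hit])] at this
            simp [hH, hit]
            exact this
        -- the piece through x must meet A j
        have hmeet : ((⋂ i ∈ s.erase j, H i) ∩ A j).Nonempty := by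
          by_contra hemp
          rw [Set.not_nonempty_iff_eq_empty] at hemp
          have hxZ : x ∈ Z := mem_iUnion₂.mpr ⟨s.erase j, hemp, hxs'⟩
          have : x ∈ U j \ Z := hGU hxj
          exact this.2 hxZ
        obtain ⟨y, hy1, hy2⟩ := hmeet
        apply h3 s
        refine ⟨y, mem_iInter₂.mpr ?_⟩
        intro i hi
        by_cases hij : i = j
        · subst hij
          by_cases hit : i ∈ t
          · exact (if_pos hit) ▸ subset_closure ((h1 i hit).2.1 hy2)
          · exact (if_neg hit) ▸ hy2
        · exact mem_iInter₂.mp hy1 i (Finset.mem_erase.mpr ⟨hij, hi⟩)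
      · -- j ∉ s : hybrid unchanged
        apply h3 s
        obtain ⟨x, hx⟩ := hs
        refine ⟨x, mem_iInter₂.mpr ?_⟩
        intro i hi
        have hij : i ≠ j := fun h => hjs (h ▸ hi)
        have := mem_iInter₂.mp hx i hi
        by_cases hit : i ∈ t
        · rw [if_pos (Finset.mem_insert_of_mem hit), Function.update_of_ne hij] at this
          exact (if_pos hit) ▸ this
        · rw [if_neg (by simp [hij, hit])] at this
          exact (if_neg hit) ▸ this
/-- Countable closed sum theorem. -/
lemma covDimLE_of_countable_closed_cover {X : Type*} [TopologicalSpace X] [NormalSpace X]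
    {F : ℕ → Set X} {n : ℕ} (hFc : ∀ k, IsClosed (F k))
    (hFu : (⋃ k, F k) = univ) (hFd : ∀ k, CovDimLE ↥(F k) n) :
    CovDimLE X n := by
  classical
  intro ι U hι U_open U_cover
  haveI := hι
  -- one step of the construction
  have key : ∀ (k : ℕ) (W : ι → Set X), (∀ i, IsOpen (W i)) → (⋃ i, W i) = univ →
      ∃ W' : ι → Set X, (∀ i, IsOpen (W' i)) ∧ (⋃ i, W' i) = univ ∧
        (∀ i, closure (W' i) ⊆ W i) ∧ ∀ x ∈ F k, {i | x ∈ W' i}.ncard ≤ n + 1 := by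
    intro k W hWo hWc
    obtain ⟨V, hV1, hV2, hV3⟩ := shrink_order_on_closed (hFc k) (hFd k) ι W hWo hWc
    obtain ⟨V', hV'u, hV'o, hV'cl⟩ := exists_iUnion_eq_closure_subset
      (fun i => (hV1 i).1) (fun x => toFinite _) hV2
    refine ⟨V', hV'o, hV'u, fun i => (hV'cl i).trans (hV1 i).2, fun x hx => ?_⟩
    refine le_trans (Set.ncard_le_ncard ?_ (toFinite _)) (hV3 x hx)
    intro i hi
    exact subset_closure.trans (hV'cl i) hi
  -- build the sequence
  choose step hs1 hs2 hs3 hs4 using key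
  let seq : ℕ → {W : ι → Set X // (∀ i, IsOpen (W i)) ∧ (⋃ i, W i) = univ} :=
    fun k => Nat.rec ⟨U, U_open, U_cover⟩
      (fun k ih => ⟨step k ih.1 ih.2.1 ih.2.2, hs1 k ih.1 ih.2.1 ih.2.2,
        hs2 k ih.1 ih.2.1 ih.2.2⟩) k
  have seq_cl : ∀ k i, closure ((seq (k+1)).1 i) ⊆ (seq k).1 i :=
    fun k => hs3 k (seq k).1 (seq k).2.1 (seq k).2.2
  have seq_ord : ∀ k, ∀ x ∈ F k, {i | x ∈ (seq (k+1)).1 i}.ncard ≤ n + 1 :=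
    fun k => hs4 k (seq k).1 (seq k).2.1 (seq k).2.2
  have seq_mono : ∀ k i, (seq (k+1)).1 i ⊆ (seq k).1 i := by
    intro k i x hx
    exact seq_cl k i (subset_closure hx)
  have seq_mono' : ∀ {k l : ℕ}, k ≤ l → ∀ i, (seq l).1 i ⊆ (seq k).1 i := by
    intro k l hkl
    induction l with
    | zero => cases Nat.le_zero.mp hkl; exact fun i => subset_rfl
    | succ l ih =>
      rcases Nat.lt_or_ge k (l+1) with h | h
      · exact fun i => (seq_mono l i).trans (ih (Nat.lt_succ_iff.mp h) i)
      · cases Nat.le_antisymm hkl h; exact fun i => subset_rfl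
  -- the limit closed family
  set A : ι → Set X := fun i => ⋂ k, (seq k).1 i with hA
  have hAcl : ∀ i, IsClosed (A i) := by
    intro i
    have : A i = ⋂ k, closure ((seq (k+1)).1 i) := by
      apply Subset.antisymm
      · intro x hx
        apply mem_iInter.mpr
        intro k
        exact subset_closure (mem_iInter.mp hx (k+1))
      · intro x hx
        apply mem_iInter.mpr
        intro k
        exact seq_cl k i (mem_iInter.mp hx k)
    rw [this]
    exact isClosed_iInter fun k => isClosed_closure
  have hAU : ∀ i, A i ⊆ U i := fun i => iInter_subset _ 0
  have hAcov : (⋃ i, A i) = univ := by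
    apply eq_univ_of_forall
    intro x
    -- the decreasing sequence of index sets
    set S : ℕ → Set ι := fun k => {i | x ∈ (seq k).1 i} with hS
    have hSne : ∀ k, (S k).Nonempty := by
      intro k
      have hx : x ∈ ⋃ i, (seq k).1 i := by rw [(seq k).2.2]; trivial
      exact mem_iUnion.mp hx
    have hSmono : ∀ {k l}, k ≤ l → S l ⊆ S k := fun {k l} h i hi => seq_mono' h i hi
    -- find the minimal cardinality
    have hne' : {m | ∃ k, (S k).ncard = m}.Nonempty := ⟨(S 0).ncard, 0, rfl⟩
    obtain ⟨k0, hk0⟩ := Nat.sInf_mem hne'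
    have hk0min : ∀ l, (S k0).ncard ≤ (S l).ncard := fun l => hk0 ▸ Nat.sInf_le ⟨l, rfl⟩
    have hstab : ∀ l, k0 ≤ l → S l = S k0 := by
      intro l hl
      exact Set.eq_of_subset_of_ncard_le (hSmono hl) (hk0min l) (toFinite _)
    obtain ⟨i, hi⟩ := hSne k0
    refine mem_iUnion.mpr ⟨i, mem_iInter.mpr fun k => ?_⟩
    rcases le_or_gt k k0 with h | h
    · exact hSmono h hi
    · have : i ∈ S k := by rw [hstab k h.le]; exact hi
      exact this
  have hAord : ∀ x : X, {i | x ∈ A i}.ncard ≤ n + 1 := by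
    intro x
    have : x ∈ ⋃ k, F k := hFu ▸ mem_univ x
    obtain ⟨k, hk⟩ := mem_iUnion.mp this
    refine le_trans (Set.ncard_le_ncard ?_ (toFinite _)) (seq_ord k x hk)
    exact fun i hi => mem_iInter.mp hi (k+1)
  -- swell to an open family
  obtain ⟨V, hV1, hV2⟩ := swelling A U hAcl U_open hAU
  refine ⟨V, fun i => ⟨(hV1 i).1, (hV1 i).2.2⟩, ?_, ?_⟩
  · apply eq_univ_of_forall
    intro x
    have : x ∈ ⋃ i, A i := hAcov ▸ mem_univ x
    obtain ⟨i, hi⟩ := mem_iUnion.mp this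
    exact mem_iUnion.mpr ⟨i, (hV1 i).2.1 hi⟩
  · intro x
    refine ⟨toFinite _, ?_⟩
    by_contra hlt
    push_neg at hlt
    -- extract a finset of size n+2 inside {i | x ∈ V i}
    obtain ⟨t, ht_sub, ht_card⟩ := Set.exists_subset_card_eq
      (Nat.succ_le_of_lt hlt : n + 2 ≤ {i | x ∈ V i}.ncard)
    have htf : t.Finite := toFinite t
    have hmem : (⋂ i ∈ htf.toFinset, V i).Nonempty := by
      refine ⟨x, mem_iInter₂.mpr fun i hi => ?_⟩
      exact ht_sub (htf.mem_toFinset.mp hi)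
    obtain ⟨y, hy⟩ := hV2 htf.toFinset hmem
    have hty : t ⊆ {i | y ∈ A i} := by
      intro i hi
      exact mem_iInter₂.mp hy i (htf.mem_toFinset.mpr hi)
    have := Set.ncard_le_ncard hty (toFinite _)
    rw [ht_card] at this
    have := this.trans (hAord y)
    omega

/-- Slices of an open-in-closed set by distance to the complement. -/
lemma slice_decomp {K : Type*} [MetricSpace K] (G Y : Set K) (hG : IsOpen G)
    (hY : IsClosed Y) :
    ∃ D : ℕ → Set K, (∀ j, IsClosed (D j)) ∧ (∀ j, D j ⊆ G ∩ Y) ∧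
      (⋃ j, D j) = G ∩ Y := by
  refine ⟨fun j => Y ∩ ⋂ y ∈ Gᶜ, {x | 1/(j+1 : ℝ) ≤ dist x y}, fun j => ?_, fun j => ?_, ?_⟩
  · refine hY.inter (isClosed_biInter fun y _ => ?_)
    exact isClosed_le continuous_const (continuous_id.dist continuous_const)
  · rintro x ⟨hxY, hx⟩
    refine ⟨?_, hxY⟩
    by_contra hxG
    have := mem_iInter₂.mp hx x hxG
    simp only [mem_setOf_eq, dist_self] at this
    have hpos : (0:ℝ) < 1/(j+1 : ℝ) := by positivity
    linarith
  · apply Subset.antisymm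
    · exact iUnion_subset fun j => by
        rintro x ⟨hxY, hx⟩
        refine ⟨?_, hxY⟩
        by_contra hxG
        have := mem_iInter₂.mp hx x hxG
        simp only [mem_setOf_eq, dist_self] at this
        have hpos : (0:ℝ) < 1/(j+1 : ℝ) := by positivity
        linarith
    · rintro x ⟨hxG, hxY⟩
      obtain ⟨ε, hε, hball⟩ := Metric.isOpen_iff.mp hG x hxG
      obtain ⟨j, hj⟩ := exists_nat_one_div_lt hε
      refine mem_iUnion.mpr ⟨j, hxY, mem_iInter₂.mpr fun y hy => ?_⟩
      simp only [mem_setOf_eq]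
      by_contra hlt
      push_neg at hlt
      have : y ∈ Metric.ball x ε := by
        rw [Metric.mem_ball, dist_comm]
        linarith
      exact hy (hball this)

section fdlemmas
variable {X : Type*} [TopologicalSpace X]

lemma fdKernel_subset (Y : Set X) : fdKernel Y ⊆ Y := by
  rintro x ⟨U, ⟨hUY, -, -⟩, hx⟩
  exact hUY hx

lemma fdKernel_relOpen (Y : Set X) : ∃ G : Set X, IsOpen G ∧ fdKernel Y = G ∩ Y := by
  refine ⟨⋃₀ {V : Set X | IsOpen V ∧
      V ∩ Y ∈ {U : Set X | U ⊆ Y ∧ (∃ V' : Set X, IsOpen V' ∧ U = V' ∩ Y) ∧ TopFiniteDim ↥U}},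
    isOpen_sUnion (fun V hV => hV.1), ?_⟩
  apply Subset.antisymm
  · rintro x ⟨U, hU, hx⟩
    obtain ⟨hUY, ⟨V, hVo, rfl⟩, hfd⟩ := hU
    exact ⟨⟨V, ⟨hVo, ⟨hUY, ⟨V, hVo, rfl⟩, hfd⟩⟩, hx.1⟩, hx.2⟩
  · rintro x ⟨⟨V, ⟨hVo, hmem⟩, hxV⟩, hxY⟩
    exact ⟨V ∩ Y, hmem, ⟨hxV, hxY⟩⟩

lemma fdDeriv_zero : fdDeriv X 0 = univ := Ordinal.limitRecOn_zero _ _ _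

lemma fdDeriv_succ (α : Ordinal) :
    fdDeriv X (Order.succ α) = fdDeriv X α \ fdKernel (fdDeriv X α) :=
  Ordinal.limitRecOn_succ _ _ _ _

lemma fdDeriv_limit {α : Ordinal} (hα : Order.IsSuccLimit α) :
    fdDeriv X α = ⋂ β, ⋂ _ : β < α, fdDeriv X β :=
  Ordinal.limitRecOn_limit _ _ _ _ hα

lemma fdDeriv_antitone : ∀ {α β : Ordinal}, β ≤ α → fdDeriv X α ⊆ fdDeriv X β := by
  intro α
  induction α using Ordinal.limitRecOn with
  | zero =>
    intro β hβ
    rw [nonpos_iff_eq_zero.mp hβ]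
  | add_one α ih =>
    rw [Ordinal.add_one_eq_succ]
    intro β hβ
    rcases Order.le_succ_iff_eq_or_le.mp hβ with rfl | hβ'
    · exact subset_rfl
    · calc fdDeriv X (Order.succ α) ⊆ fdDeriv X α := by rw [fdDeriv_succ]; exact diff_subset
        _ ⊆ fdDeriv X β := ih hβ'
  | limit α hα ih =>
    intro β hβ
    rcases eq_or_lt_of_le hβ with rfl | hβ'
    · exact subset_rfl
    · rw [fdDeriv_limit hα]
      exact iInter₂_subset β hβ'

lemma fdDeriv_closed : ∀ α : Ordinal, IsClosed (fdDeriv X α) := by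
  intro α
  induction α using Ordinal.limitRecOn with
  | zero => rw [fdDeriv_zero]; exact isClosed_univ
  | add_one α ih =>
    rw [Ordinal.add_one_eq_succ, fdDeriv_succ]
    obtain ⟨G, hGo, hG⟩ := fdKernel_relOpen (fdDeriv X α)
    have : fdDeriv X α \ fdKernel (fdDeriv X α) = fdDeriv X α ∩ Gᶜ := by
      rw [hG]
      ext x
      simp only [mem_diff, mem_inter_iff, mem_compl_iff]
      tauto
    rw [this]
    exact ih.inter hGo.isClosed_compl
  | limit α hα ih =>
    rw [fdDeriv_limit hα]
    exact isClosed_iInter fun β => isClosed_iInter fun hβ => ih β hβ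

end fdlemmas

/-- A compact metrizable space is strongly countable-dimensional (a countable
union of closed finite-dimensional subspaces) iff its fd-height is countable. -/
theorem strongly_countable_dimensional_iff_fd_height_countable
    (K : Type*) [TopologicalSpace K] [CompactSpace K]
    [TopologicalSpace.MetrizableSpace K] :
    (∃ F : ℕ → Set K, (∀ n, IsClosed (F n) ∧ TopFiniteDim ↥(F n)) ∧
        (⋃ n, F n) = univ) ↔
      ∃ α : Ordinal, α < (Cardinal.aleph 1).ord ∧ fdDeriv K α = ∅ := by
  classical
  letI : MetricSpace K := TopologicalSpace.metrizableSpaceMetric K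
  constructor
  · rintro ⟨F, hF, hFcov⟩
    -- Baire step : every nonempty closed subset has nonempty fd-kernel
    have kernel_ne : ∀ Y : Set K, IsClosed Y → Y.Nonempty → (fdKernel Y).Nonempty := by
      intro Y hYc hYne
      haveI : Nonempty ↥Y := hYne.to_subtype
      haveI : CompactSpace ↥Y := isCompact_iff_compactSpace.mp hYc.isCompact
      obtain ⟨m, x', hx'⟩ := nonempty_interior_of_iUnion_of_closed
        (f := fun m => (Subtype.val ⁻¹' F m : Set ↥Y))
        (fun m => (hF m).1.preimage continuous_subtype_val)
        (by rw [← preimage_iUnion, hFcov, preimage_univ])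
      obtain ⟨G, hGo, hGO⟩ := isOpen_induced_iff.mp
        (isOpen_interior (s := (Subtype.val ⁻¹' F m : Set ↥Y)))
      set U : Set K := G ∩ Y with hU
      have hUFm : U ⊆ F m := by
        rintro u ⟨huG, huY⟩
        have : (⟨u, huY⟩ : ↥Y) ∈ interior (Subtype.val ⁻¹' F m : Set ↥Y) := by
          rw [← hGO]; exact huG
        have h2 : (⟨u, huY⟩ : ↥Y) ∈ (Subtype.val ⁻¹' F m : Set ↥Y) := interior_subset this
        exact h2
      have hUne : U.Nonempty := by
        refine ⟨x'.1, ?_, x'.2⟩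
        have : x' ∈ (Subtype.val ⁻¹' G : Set ↥Y) := by rw [hGO]; exact hx'
        exact this
      obtain ⟨D, hDc, hDsub, hDun⟩ := slice_decomp G Y hGo hYc
      obtain ⟨nm, hnm⟩ := (hF m).2
      have hDdim : ∀ j, CovDimLE ↥(D j) nm := by
        intro j
        refine covDimLE_subset_closed ((hDsub j).trans hUFm) (hDc j) ?_ hnm
        rw [inter_eq_left.mpr ((hDsub j).trans hUFm)]
      have hUdim : CovDimLE ↥U nm := by
        apply covDimLE_of_countable_closed_cover
          (F := fun j => (Subtype.val ⁻¹' D j : Set ↥U))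
        · exact fun j => (hDc j).preimage continuous_subtype_val
        · rw [← preimage_iUnion, hDun]
          apply eq_univ_of_forall
          exact fun u => u.2
        · intro j
          exact covDimLE_homeomorph (subsetHomeo (hDsub j)).symm (hDdim j)
      obtain ⟨u, hu⟩ := hUne
      exact ⟨u, U, ⟨inter_subset_right, ⟨G, hGo, rfl⟩, nm, hUdim⟩, hu⟩
    -- stabilization before ω₁
    by_contra hcon
    push_neg at hcon
    have hne : ∀ α : Ordinal, α < (Cardinal.aleph 1).ord → (fdDeriv K α).Nonempty := hcon
    -- choose witnesses
    have pick : ∀ α : ↥(Iio ((Cardinal.aleph 1).ord)),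
        ∃ b ∈ TopologicalSpace.countableBasis K,
          (∃ x ∈ fdDeriv K α.1, x ∈ b) ∧ b ⊆ (fdDeriv K (Order.succ α.1))ᶜ := by
      rintro ⟨α, hα⟩
      obtain ⟨x, hx⟩ := kernel_ne (fdDeriv K α) (fdDeriv_closed α) (hne α hα)
      have hxY : x ∈ fdDeriv K α := fdKernel_subset _ hx
      have hxs : x ∉ fdDeriv K (Order.succ α) := by
        rw [fdDeriv_succ]
        exact fun h => h.2 hx
      obtain ⟨b, hb, hxb, hbsub⟩ :=
        (TopologicalSpace.isBasis_countableBasis K).exists_subset_of_mem_open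
          (hxs : x ∈ (fdDeriv K (Order.succ α))ᶜ)
          (fdDeriv_closed (Order.succ α)).isOpen_compl
      exact ⟨b, hb, ⟨x, hxY, hxb⟩, hbsub⟩
    choose b hbmem hbx hbsub using pick
    have key : ∀ a a' : ↥(Iio ((Cardinal.aleph 1).ord)), a.1 < a'.1 → b a ≠ b a' := by
      intro a a' hlt heq
      obtain ⟨x, hx1, hx2⟩ := hbx a'
      have hmem : x ∈ fdDeriv K (Order.succ a.1) :=
        fdDeriv_antitone (Order.succ_le_of_lt hlt) hx1
      exact hbsub a (heq ▸ hx2) hmem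
    have hinj : Function.Injective b := by
      intro a a' h
      rcases lt_trichotomy a.1 a'.1 with hlt | heq | hlt
      · exact absurd h (key a a' hlt)
      · exact Subtype.ext heq
      · exact absurd h.symm (key a' a hlt)
    -- contradiction with cardinality
    have hcnt : Countable ↥(TopologicalSpace.countableBasis K) :=
      (TopologicalSpace.countable_countableBasis K).to_subtype
    have : Countable ↥(Iio ((Cardinal.aleph 1).ord)) := by
      have hfinj : Function.Injective
          (fun α : ↥(Iio ((Cardinal.aleph 1).ord)) => (⟨b α, hbmem α⟩ :
            ↥(TopologicalSpace.countableBasis K))) :=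
        fun a a' h => hinj (by simpa using h)
      exact hfinj.countable
    have hcount : (Iio ((Cardinal.aleph 1).ord)).Countable := countable_coe_iff.mp this
    have hlt := (Cardinal.countable_iff_lt_aleph_one _).mp hcount
    rw [Ordinal.mk_Iio_ordinal, Cardinal.card_ord] at hlt
    rw [Cardinal.lift_aleph, Ordinal.lift_one] at hlt
    exact lt_irrefl _ hlt
  · rintro ⟨α, hα, hαe⟩
    -- every point exits at a successor stage
    have exit : ∀ x : K, ∃ γ, γ < α ∧ x ∈ fdKernel (fdDeriv K γ) := by
      intro x
      have hxs : {β : Ordinal | x ∉ fdDeriv K β}.Nonempty :=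
        ⟨α, by simp only [mem_setOf_eq, hαe]; exact notMem_empty x⟩
      obtain ⟨γ, hγ, hγmin⟩ := Ordinal.lt_wf.has_min _ hxs
      have hγ' : x ∉ fdDeriv K γ := hγ
      rcases Ordinal.zero_or_succ_or_isSuccLimit γ with rfl | ⟨δ, rfl⟩ | hlim
      · exact absurd (by rw [fdDeriv_zero]; trivial) hγ'
      · have hδmem : x ∈ fdDeriv K δ := by
          by_contra h
          exact hγmin δ h (Order.lt_succ δ)
        have hδα : δ < α := by
          by_contra h
          push_neg at h
          have := fdDeriv_antitone h hδmem
          rw [hαe] at this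
          exact this
        refine ⟨δ, hδα, ?_⟩
        rw [fdDeriv_succ] at hγ'
        by_contra h
        exact hγ' ⟨hδmem, h⟩
      · exfalso
        rw [fdDeriv_limit hlim] at hγ'
        simp only [mem_iInter, not_forall] at hγ'
        obtain ⟨β, hβγ, hβ⟩ := hγ'
        exact hγmin β hβ hβγ
    -- per-stage countable families of closed fd sets
    have perγ : ∀ γ : Ordinal, ∃ 𝒞 : Set (Set K), 𝒞.Countable ∧
        (∀ C ∈ 𝒞, IsClosed C ∧ TopFiniteDim ↥C) ∧
        fdKernel (fdDeriv K γ) ⊆ ⋃₀ 𝒞 := by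
      intro γ
      set Y := fdDeriv K γ with hYdef
      have hYc : IsClosed Y := fdDeriv_closed γ
      set Fam := {U : Set K | U ⊆ Y ∧ (∃ V : Set K, IsOpen V ∧ U = V ∩ Y) ∧ TopFiniteDim ↥U}
        with hFam
      -- countable subfamily with same union, working in the subspace Y
      have hopen : ∀ s ∈ (fun U => (Subtype.val ⁻¹' U : Set ↥Y)) '' Fam, IsOpen s := by
        rintro s ⟨U, hU, rfl⟩
        obtain ⟨-, ⟨V, hVo, rfl⟩, -⟩ := hU
        have heq : (Subtype.val ⁻¹' (V ∩ Y) : Set ↥Y) = Subtype.val ⁻¹' V := by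
          ext u; exact ⟨fun h => h.1, fun h => ⟨h, u.2⟩⟩
        show IsOpen (Subtype.val ⁻¹' (V ∩ Y) : Set ↥Y)
        rw [heq]
        exact hVo.preimage continuous_subtype_val
      obtain ⟨T', hT'c, hT'sub, hT'u⟩ :=
        TopologicalSpace.isOpen_sUnion_countable _ hopen
      have choice : ∀ t ∈ T', ∃ U, U ∈ Fam ∧ (Subtype.val ⁻¹' U : Set ↥Y) = t :=
        fun t ht => hT'sub ht
      choose! g hg1 hg2 using choice
      -- slices for each U in Fam
      have slice_fam : ∀ U ∈ Fam, ∃ D : ℕ → Set K,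
          (∀ j, IsClosed (D j) ∧ TopFiniteDim ↥(D j)) ∧ U ⊆ ⋃ j, D j := by
        rintro U ⟨hUY, ⟨V, hVo, rfl⟩, nU, hnU⟩
        obtain ⟨D, hDc, hDsub, hDun⟩ := slice_decomp V Y hVo hYc
        refine ⟨D, fun j => ⟨hDc j, nU, ?_⟩, by rw [hDun]⟩
        refine covDimLE_subset_closed (hDsub j) (hDc j) ?_ hnU
        rw [inter_eq_left.mpr (hDsub j)]
      choose! Dfun hD1 hD2 using slice_fam
      refine ⟨⋃ t ∈ T', range (Dfun (g t)), ?_, ?_, ?_⟩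
      · exact hT'c.biUnion (fun t _ => countable_range _)
      · rintro C hC
        obtain ⟨t, ht, j, rfl⟩ := by
          simpa only [mem_iUnion, mem_range, exists_prop] using hC
        exact hD1 (g t) (hg1 t ht) j
      · intro x hx
        have hxY : x ∈ Y := fdKernel_subset _ hx
        have hxU : (⟨x, hxY⟩ : ↥Y) ∈ ⋃₀ ((fun U => (Subtype.val ⁻¹' U : Set ↥Y)) '' Fam) := by
          obtain ⟨U, hU, hxU⟩ := hx
          exact ⟨Subtype.val ⁻¹' U, mem_image_of_mem _ hU, hxU⟩
        rw [← hT'u] at hxU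
        obtain ⟨t, ht, hxt⟩ := hxU
        have hxgt : x ∈ g t := by
          have := hg2 t ht
          rw [← this] at hxt
          exact hxt
        have := hD2 (g t) (hg1 t ht) hxgt
        obtain ⟨j, hj⟩ := mem_iUnion.mp this
        exact ⟨Dfun (g t) j, mem_biUnion ht (mem_range_self j), hj⟩
    choose 𝒞 h𝒞c h𝒞cl h𝒞cov using perγ
    -- assemble the global countable family
    set 𝔉 : Set (Set K) := insert ∅ (⋃ γ ∈ Iio α, 𝒞 γ) with h𝔉
    have h𝔉c : 𝔉.Countable := by
      refine (Set.Countable.insert _ ?_)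
      have hIio : (Iio α).Countable := by
        rw [Cardinal.countable_iff_lt_aleph_one, Ordinal.mk_Iio_ordinal]
        have h1 : α.card < Cardinal.aleph 1 := Cardinal.lt_ord.mp hα
        calc Cardinal.lift.{_+1} α.card
            < Cardinal.lift.{_+1} (Cardinal.aleph 1) := Cardinal.lift_lt.mpr h1
          _ = Cardinal.aleph 1 := by rw [Cardinal.lift_aleph, Ordinal.lift_one]
      exact hIio.biUnion (fun γ _ => h𝒞c γ)
    have h𝔉ne : 𝔉.Nonempty := ⟨∅, mem_insert _ _⟩
    obtain ⟨f, hf⟩ := h𝔉c.exists_eq_range h𝔉ne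
    refine ⟨f, fun n => ?_, ?_⟩
    · have : f n ∈ 𝔉 := by rw [hf]; exact mem_range_self n
      rcases mem_insert_iff.mp this with h | hmem
      · refine ⟨by rw [h]; exact isClosed_empty, 0, ?_⟩
        haveI : IsEmpty ↥(f n) := by
          rw [isEmpty_coe_sort]; exact h
        exact covDimLE_of_isEmpty _ 0
      · obtain ⟨γ, hγ, hCγ⟩ := by
          simpa only [mem_iUnion, exists_prop] using hmem
        exact h𝒞cl γ _ hCγ
    · apply eq_univ_of_forall
      intro x
      obtain ⟨γ, hγα, hxk⟩ := exit x
      obtain ⟨C, hC, hxC⟩ := h𝒞cov γ hxk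
      have hCmem : C ∈ 𝔉 := mem_insert_of_mem _ (mem_biUnion hγα hC)
      rw [hf] at hCmem
      obtain ⟨n, rfl⟩ := hCmem
      exact mem_iUnion.mpr ⟨n, hxC⟩
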